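/- arXiv:0712.2749 — 2 statements merged into one kernel-verified Lean document; each statement's English description precedes it below -/
import Mathlib

section
/- If two finite simple graphs G_1 and G_2 have the same number of vertices n and satisfy t(F,G_1) = t(F,G_2) for every graph F, then G_1 and G_2 are isomorphic. -/
open Function

section Aux

variable {A B V W : Type*}

instance setoidFinite (α : Type*) [Finite α] : Finite (Setoid α) :=
  Finite.of_injective (fun s => (s.r : α → α → Prop))
    (fun a b h => Setoid.ext fun x y => by simp only [show a.r = b.r from h])

/-- Count of homomorphisms from `F` to `G`. -/
noncomputable def homCount (F : SimpleGraph A) (G : SimpleGraph V) : ℕ :=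
  Nat.card {f : A → V // ∀ ⦃i j⦄, F.Adj i j → G.Adj (f i) (f j)}

/-- Count of injective homomorphisms from `F` to `G`. -/
noncomputable def injCount (F : SimpleGraph A) (G : SimpleGraph V) : ℕ :=
  Nat.card {f : A → V // Injective f ∧ ∀ ⦃i j⦄, F.Adj i j → G.Adj (f i) (f j)}

lemma injCount_comap (e : A ≃ B) (F : SimpleGraph B) (G : SimpleGraph V) :
    injCount (F.comap e) G = injCount F G := by
  refine Nat.card_congr ?_
  refine ⟨fun g => ⟨g.1 ∘ e.symm, ?_, ?_⟩, fun f => ⟨f.1 ∘ e, ?_, ?_⟩, ?_, ?_⟩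
  · exact g.2.1.comp e.symm.injective
  · intro i j hij
    exact g.2.2 (by simpa using hij : (F.comap e).Adj (e.symm i) (e.symm j))
  · exact f.2.1.comp e.injective
  · intro i j hij
    exact f.2.2 hij
  · rintro ⟨g, hg⟩; ext x; simp
  · rintro ⟨f, hf⟩; ext x; simp

/-- The quotient graph of `F` by a setoid `s`. -/
def quotGraph (F : SimpleGraph A) (s : Setoid A) : SimpleGraph (Quotient s) where
  Adj x y := x ≠ y ∧ ∃ i j, F.Adj i j ∧ Quotient.mk s i = x ∧ Quotient.mk s j = y
  symm := by constructor; rintro x y ⟨hxy, i, j, hij, hi, hj⟩; exact ⟨hxy.symm, j, i, hij.symm, hj, hi⟩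
  loopless := by constructor; rintro x ⟨h, _⟩; exact h rfl

/-- A setoid is independent for `F` if it never identifies two adjacent vertices. -/
def Indep (F : SimpleGraph A) (s : Setoid A) : Prop :=
  ∀ ⦃i j⦄, F.Adj i j → ¬ s.r i j

lemma mk_bot_injective : Injective (Quotient.mk (⊥ : Setoid A)) := by
  intro a b hab
  simpa [Setoid.bot_def] using Quotient.eq''.mp hab

lemma injCount_quotGraph_bot (F : SimpleGraph A) (G : SimpleGraph V) :
    injCount (quotGraph F ⊥) G = injCount F G := by
  have hbij : Bijective (Quotient.mk (⊥ : Setoid A)) :=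
    ⟨mk_bot_injective, Quot.mk_surjective⟩
  let e : A ≃ Quotient (⊥ : Setoid A) := Equiv.ofBijective _ hbij
  have hcomap : (quotGraph F ⊥).comap e = F := by
    ext i j
    simp only [SimpleGraph.comap_adj, quotGraph]
    constructor
    · rintro ⟨hne, a, b, hab, ha, hb⟩
      have ha' : a = i := mk_bot_injective ha
      have hb' : b = j := mk_bot_injective hb
      rwa [ha', hb'] at hab
    · intro hij
      exact ⟨fun hq => hij.ne (mk_bot_injective hq), i, j, hij, rfl, rfl⟩
  conv_rhs => rw [← hcomap]
  rw [injCount_comap]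

lemma setoid_eq_bot_of_card [Fintype A] (s : Setoid A)
    [Fintype (Quotient s)] (hc : Fintype.card (Quotient s) = Fintype.card A) : s = ⊥ := by
  have hsurj : Surjective (Quotient.mk s) := fun x => ⟨x.out, Quotient.out_eq x⟩
  have hinj : Injective (Quotient.mk s) :=
    ((Fintype.bijective_iff_surjective_and_card _).mpr ⟨hsurj, hc.symm⟩).injective
  refine Setoid.ext fun a b => ?_
  rw [Setoid.bot_def]
  exact ⟨fun h => hinj (Quotient.sound h), fun h => h ▸ Setoid.refl a⟩

lemma card_quotient_lt [Fintype A] (s : Setoid A) [Fintype (Quotient s)]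
    (hs : s ≠ ⊥) : Fintype.card (Quotient s) < Fintype.card A := by
  refine lt_of_le_of_ne (Fintype.card_le_of_surjective _
    (fun x => ⟨x.out, Quotient.out_eq x⟩ : Surjective (Quotient.mk s))) fun hc => ?_
  exact hs (setoid_eq_bot_of_card s hc)

lemma homCount_eq_sum {k : ℕ} [Fintype V] (F : SimpleGraph (Fin k))
    (G : SimpleGraph V) :
    letI : Fintype {s : Setoid (Fin k) // Indep F s} := Fintype.ofFinite _
    homCount F G = ∑ s : {s : Setoid (Fin k) // Indep F s}, injCount (quotGraph F s.1) G := by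
  classical
  letI : Fintype {s : Setoid (Fin k) // Indep F s} := Fintype.ofFinite _
  set S := Σ s : {s : Setoid (Fin k) // Indep F s},
    {g : Quotient s.1 → V // Injective g ∧ ∀ ⦃x y⦄, (quotGraph F s.1).Adj x y → G.Adj (g x) (g y)}
    with hS
  haveI : ∀ s : {s : Setoid (Fin k) // Indep F s},
      Fintype {g : Quotient s.1 → V // Injective g ∧
        ∀ ⦃x y⦄, (quotGraph F s.1).Adj x y → G.Adj (g x) (g y)} := fun s => Fintype.ofFinite _
  have hΦ : ∀ p : S, ∀ ⦃i j⦄, F.Adj i j →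
      G.Adj (p.2.1 (Quotient.mk p.1.1 i)) (p.2.1 (Quotient.mk p.1.1 j)) := by
    rintro ⟨⟨s, hs⟩, g, hg1, hg2⟩ i j hij
    refine hg2 ⟨?_, i, j, hij, rfl, rfl⟩
    intro hq
    exact hs hij (Quotient.eq''.mp hq)
  let Φ : S → {f : Fin k → V // ∀ ⦃i j⦄, F.Adj i j → G.Adj (f i) (f j)} :=
    fun p => ⟨p.2.1 ∘ Quotient.mk p.1.1, hΦ p⟩
  have hbij : Function.Bijective Φ := by
    constructor
    · rintro ⟨⟨s, hs⟩, g, hg1, hg2⟩ ⟨⟨s', hs'⟩, g', hg1', hg2'⟩ hfe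
      have hfun : g ∘ Quotient.mk s = g' ∘ Quotient.mk s' := congrArg Subtype.val hfe
      have hss : s = s' := by
        refine Setoid.ext fun a b => ?_
        constructor
        · intro hab
          have : g ⟦a⟧ = g ⟦b⟧ := congrArg g (Quotient.sound hab)
          have : g' ⟦a⟧ = g' ⟦b⟧ := by
            have ha := congrFun hfun a; have hb := congrFun hfun b
            simp only [Function.comp_apply] at ha hb
            rw [← ha, ← hb]; exact this
          exact Quotient.eq''.mp (hg1' this)
        · intro hab
          have : g' ⟦a⟧ = g' ⟦b⟧ := congrArg g' (Quotient.sound hab)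
          have : g ⟦a⟧ = g ⟦b⟧ := by
            have ha := congrFun hfun a; have hb := congrFun hfun b
            simp only [Function.comp_apply] at ha hb
            rw [ha, hb]; exact this
          exact Quotient.eq''.mp (hg1 this)
      subst hss
      have hgg : g = g' := by
        funext x
        induction x using Quotient.ind with
        | _ a => exact congrFun hfun a
      subst hgg
      rfl
    · rintro ⟨f, hf⟩
      set s : Setoid (Fin k) := Setoid.ker f with hsdef
      have hs : Indep F s := fun i j hij hr => (hf hij).ne hr
      let g : Quotient s → V := Quotient.lift f (fun a b h => h)
      have hg1 : Injective g := by
        intro x y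
        induction x using Quotient.ind with
        | _ a =>
          induction y using Quotient.ind with
          | _ b => exact fun hab => Quotient.sound hab
      have hg2 : ∀ ⦃x y⦄, (quotGraph F s).Adj x y → G.Adj (g x) (g y) := by
        rintro x y ⟨-, i, j, hij, rfl, rfl⟩
        exact hf hij
      exact ⟨⟨⟨s, hs⟩, g, hg1, hg2⟩, rfl⟩
  calc homCount F G = Nat.card S := (Nat.card_congr (Equiv.ofBijective Φ hbij)).symm
    _ = Fintype.card S := Nat.card_eq_fintype_card
    _ = ∑ s : {s : Setoid (Fin k) // Indep F s}, injCount (quotGraph F s.1) G := by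
        rw [Fintype.card_sigma]
        refine Finset.sum_congr ?_ fun s _ => (Nat.card_eq_fintype_card).symm
        congr!

lemma injCount_eq_of_homCount_eq {V₁ V₂ : Type*} [Fintype V₁] [Fintype V₂]
    (G₁ : SimpleGraph V₁) (G₂ : SimpleGraph V₂)
    (hhom : ∀ (k : ℕ) (F : SimpleGraph (Fin k)), homCount F G₁ = homCount F G₂) :
    ∀ (k : ℕ) (F : SimpleGraph (Fin k)), injCount F G₁ = injCount F G₂ := by
  intro k
  induction k using Nat.strong_induction_on with
  | _ k IH =>
    intro F
    classical
    have hsum := hhom k F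
    rw [homCount_eq_sum F G₁, homCount_eq_sum F G₂] at hsum
    letI : Fintype {s : Setoid (Fin k) // Indep F s} := Fintype.ofFinite _
    have hbot : Indep F (⊥ : Setoid (Fin k)) := by
      intro i j hij hr
      exact hij.ne (by rwa [show ((⊥ : Setoid (Fin k)).r i j) = (i = j) from
        congrFun (congrFun Setoid.bot_def i) j] at hr)
    set b0 : {s : Setoid (Fin k) // Indep F s} := ⟨⊥, hbot⟩ with hb0
    have hrest : ∀ s ∈ Finset.univ.erase b0,
        injCount (quotGraph F s.1) G₁ = injCount (quotGraph F s.1) G₂ := by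
      intro s hsmem
      have hne : s.1 ≠ ⊥ := by
        intro hcon
        exact (Finset.mem_erase.mp hsmem).1 (Subtype.ext (show s.1 = b0.1 from hcon))
      letI : Fintype (Quotient s.1) := Fintype.ofFinite _
      have hlt : Fintype.card (Quotient s.1) < k := by
        simpa using card_quotient_lt s.1 hne
      set e : Quotient s.1 ≃ Fin (Fintype.card (Quotient s.1)) := Fintype.equivFinOfCardEq rfl
      rw [← injCount_comap e.symm (quotGraph F s.1) G₁,
        ← injCount_comap e.symm (quotGraph F s.1) G₂]
      exact IH _ hlt _
    rw [← Finset.sum_erase_add _ _ (Finset.mem_univ b0),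
        ← Finset.sum_erase_add _ _ (Finset.mem_univ b0),
        Finset.sum_congr rfl hrest] at hsum
    have hkey : injCount (quotGraph F b0.1) G₁ = injCount (quotGraph F b0.1) G₂ :=
      Nat.add_left_cancel hsum
    rwa [show (b0 : {s : Setoid (Fin k) // Indep F s}).1 = ⊥ from rfl,
      injCount_quotGraph_bot, injCount_quotGraph_bot] at hkey

lemma iso_of_injective_homs {V₁ V₂ : Type*} [Fintype V₁] [Fintype V₂]
    (G₁ : SimpleGraph V₁) (G₂ : SimpleGraph V₂)
    (hcard : Fintype.card V₁ = Fintype.card V₂)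
    (f : V₁ → V₂) (hf : Injective f) (hfa : ∀ ⦃a b⦄, G₁.Adj a b → G₂.Adj (f a) (f b))
    (g : V₂ → V₁) (hg : Injective g) (hga : ∀ ⦃a b⦄, G₂.Adj a b → G₁.Adj (g a) (g b)) :
    Nonempty (G₁ ≃g G₂) := by
  classical
  have hmapsf : Sym2.map f '' G₁.edgeSet ⊆ G₂.edgeSet := by
    rintro - ⟨e, he, rfl⟩
    induction e with
    | _ a b => exact hfa he
  have hmapsg : Sym2.map g '' G₂.edgeSet ⊆ G₁.edgeSet := by
    rintro - ⟨e, he, rfl⟩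
    induction e with
    | _ a b => exact hga he
  have hfin1 : G₁.edgeSet.Finite := Set.toFinite _
  have hfin2 : G₂.edgeSet.Finite := Set.toFinite _
  have hle1 : G₁.edgeSet.ncard ≤ G₂.edgeSet.ncard := by
    rw [← Set.ncard_image_of_injective G₁.edgeSet (Sym2.map.injective hf)]
    exact Set.ncard_le_ncard hmapsf hfin2
  have hle2 : G₂.edgeSet.ncard ≤ G₁.edgeSet.ncard := by
    rw [← Set.ncard_image_of_injective G₂.edgeSet (Sym2.map.injective hg)]
    exact Set.ncard_le_ncard hmapsg hfin1
  have himg : Sym2.map f '' G₁.edgeSet = G₂.edgeSet := by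
    apply Set.eq_of_subset_of_ncard_le hmapsf _ hfin2
    rw [Set.ncard_image_of_injective G₁.edgeSet (Sym2.map.injective hf)]
    exact hle2
  have hrefl : ∀ ⦃a b⦄, G₂.Adj (f a) (f b) → G₁.Adj a b := by
    intro a b hab
    have hmem : s(f a, f b) ∈ Sym2.map f '' G₁.edgeSet := by
      rw [himg]; exact hab
    obtain ⟨e, he, heq⟩ := hmem
    induction e with
    | _ x y =>
      have : s(x, y) = s(a, b) := Sym2.map.injective hf (by simpa using heq)
      rwa [← SimpleGraph.mem_edgeSet, ← this]
  have hbij : Bijective f := (Fintype.bijective_iff_injective_and_card f).mpr ⟨hf, hcard⟩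
  exact ⟨⟨Equiv.ofBijective f hbij, fun {a b} => ⟨fun h => hrefl h, fun h => hfa h⟩⟩⟩

end Aux

/-- The homomorphism density `t(F,G)`: the probability that a uniformly random map
`V(F) → V(G)` is a graph homomorphism. -/
noncomputable def homDensity {k : ℕ} {V : Type*} [Fintype V]
    (F : SimpleGraph (Fin k)) (G : SimpleGraph V) : ℝ :=
  (Nat.card {f : Fin k → V // ∀ ⦃i j⦄, F.Adj i j → G.Adj (f i) (f j)} : ℝ) /
    (Fintype.card V : ℝ) ^ k

/-- If two finite graphs have the same number `n` of vertices and the same homomorphism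
densities `t(F,·)` for every graph `F`, then they are isomorphic. -/
theorem iso_of_card_eq_of_homDensity_eq {n : ℕ} {V₁ V₂ : Type*} [Fintype V₁] [Fintype V₂]
    (G₁ : SimpleGraph V₁) (G₂ : SimpleGraph V₂)
    (hn₁ : Fintype.card V₁ = n) (hn₂ : Fintype.card V₂ = n)
    (h : ∀ (k : ℕ) (F : SimpleGraph (Fin k)), homDensity F G₁ = homDensity F G₂) :
    Nonempty (G₁ ≃g G₂) := by
  rcases Nat.eq_zero_or_pos n with hn | hn
  · subst hn
    haveI : IsEmpty V₁ := Fintype.card_eq_zero_iff.mp hn₁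
    haveI : IsEmpty V₂ := Fintype.card_eq_zero_iff.mp hn₂
    exact ⟨⟨Equiv.equivOfIsEmpty V₁ V₂, fun {a b} => isEmptyElim a⟩⟩
  · have hhom : ∀ (k : ℕ) (F : SimpleGraph (Fin k)), homCount F G₁ = homCount F G₂ := by
      intro k F
      have hd := h k F
      rw [homDensity, homDensity, hn₁, hn₂,
        div_eq_div_iff (pow_ne_zero k (Nat.cast_ne_zero.mpr hn.ne'))
          (pow_ne_zero k (Nat.cast_ne_zero.mpr hn.ne'))] at hd
      have hd' := mul_right_cancel₀ (pow_ne_zero k (Nat.cast_ne_zero.mpr hn.ne')) hd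
      exact Nat.cast_injective hd'
    have hinj := injCount_eq_of_homCount_eq G₁ G₂ hhom
    let e₁ : V₁ ≃ Fin n := Fintype.equivFinOfCardEq hn₁
    let e₂ : V₂ ≃ Fin n := Fintype.equivFinOfCardEq hn₂
    -- an injective hom G₁ → G₂
    have hpos1 : 0 < injCount (G₁.comap e₁.symm) G₁ := by
      rw [injCount_comap]
      haveI : Nonempty {f : V₁ → V₁ // Injective f ∧
          ∀ ⦃i j⦄, G₁.Adj i j → G₁.Adj (f i) (f j)} := ⟨⟨id, injective_id, fun _ _ h => h⟩⟩
      exact Nat.card_pos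
    have hpos1' : 0 < injCount (G₁.comap e₁.symm) G₂ := hinj n _ ▸ hpos1
    have hnon1 : Nonempty {f : Fin n → V₂ // Injective f ∧
        ∀ ⦃i j⦄, (G₁.comap e₁.symm).Adj i j → G₂.Adj (f i) (f j)} := by
      by_contra hcon
      rw [not_nonempty_iff] at hcon
      rw [injCount, Nat.card_of_isEmpty] at hpos1'
      exact absurd hpos1' (lt_irrefl 0)
    obtain ⟨⟨f0, hf0inj, hf0hom⟩⟩ := hnon1
    -- an injective hom G₂ → G₁
    have hpos2 : 0 < injCount (G₂.comap e₂.symm) G₂ := by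
      rw [injCount_comap]
      haveI : Nonempty {f : V₂ → V₂ // Injective f ∧
          ∀ ⦃i j⦄, G₂.Adj i j → G₂.Adj (f i) (f j)} := ⟨⟨id, injective_id, fun _ _ h => h⟩⟩
      exact Nat.card_pos
    have hpos2' : 0 < injCount (G₂.comap e₂.symm) G₁ := (hinj n _).symm ▸ hpos2
    have hnon2 : Nonempty {f : Fin n → V₁ // Injective f ∧
        ∀ ⦃i j⦄, (G₂.comap e₂.symm).Adj i j → G₁.Adj (f i) (f j)} := by
      by_contra hcon
      rw [not_nonempty_iff] at hcon
      rw [injCount, Nat.card_of_isEmpty] at hpos2'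
      exact absurd hpos2' (lt_irrefl 0)
    obtain ⟨⟨g0, hg0inj, hg0hom⟩⟩ := hnon2
    refine iso_of_injective_homs G₁ G₂ (hn₁.trans hn₂.symm)
      (f0 ∘ e₁) (hf0inj.comp e₁.injective) ?_ (g0 ∘ e₂) (hg0inj.comp e₂.injective) ?_
    · intro a b hab
      exact hf0hom (by simpa using hab : (G₁.comap e₁.symm).Adj (e₁ a) (e₁ b))
    · intro a b hab
      exact hg0hom (by simpa using hab : (G₂.comap e₂.symm).Adj (e₂ a) (e₂ b))
end

section
/- Let H be an exchangeable random infinite graph on ℕ such that the tail σ-field ∩_{n≥1} σ(H restricted to vertices {n, n+1, ...}) is trivial. Then for every labelled finite graph F on [k], P(H ⊇ F ∪ F_k) = P(H ⊇ F)^2, where F_k is the copy of F shifted to vertex set {k+1,...,2k}. -/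
open MeasureTheory ProbabilityTheory Filter Set


lemma exists_perm_extend (m : ℕ) (f : ℕ → ℕ) (hf : Set.InjOn f (Set.Iio m)) :
    ∃ σ : Equiv.Perm ℕ, {i | σ i ≠ i}.Finite ∧ ∀ i < m, σ i = f i := by
  induction m with
  | zero => exact ⟨1, by simp, by simp⟩
  | succ m ih =>
    obtain ⟨σ', hfin, hagree⟩ := ih (hf.mono (fun x hx => lt_trans hx (Nat.lt_succ_self m)))
    refine ⟨σ'.trans (Equiv.swap (σ' m) (f m)), ?_, ?_⟩
    · apply Set.Finite.subset (hfin.union (Set.Finite.insert (σ' m) (Set.finite_singleton (f m))))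
      intro i hi
      simp only [Set.mem_setOf_eq, Equiv.trans_apply] at hi
      by_cases h1 : σ' i = i
      · rw [h1] at hi
        rcases eq_or_ne i (σ' m) with h | h
        · exact Or.inr (Or.inl h)
        · rcases eq_or_ne i (f m) with h2 | h2
          · exact Or.inr (Or.inr h2)
          · exact absurd (Equiv.swap_apply_of_ne_of_ne h h2) hi
      · exact Or.inl h1
    · intro i hi
      rcases Nat.lt_succ_iff_lt_or_eq.mp hi with h | h
      · have h1 : σ' i = f i := hagree i h
        have h2 : f i ≠ σ' m := by
          intro he
          have := σ'.injective (h1.symm ▸ he : σ' i = σ' m)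
          omega
        have h3 : f i ≠ f m := fun he =>
          absurd (hf (by simp; omega) (by simp) he) (by omega)
        simp [Equiv.trans_apply, h1, Equiv.swap_apply_of_ne_of_ne h2 h3]
      · subst h
        simp [Equiv.trans_apply]


/-- The event (in graph space) that the shifted copy of `F` at offset `t` is contained. -/
def graphSlice {k : ℕ} (F : SimpleGraph (Fin k)) (t : ℕ) : Set (ℕ → ℕ → Bool) :=
  {x | ∀ i j : Fin k, F.Adj i j → x ((i : ℕ) + t) ((j : ℕ) + t) = true}

lemma measurableSet_graphSlice {k : ℕ} (F : SimpleGraph (Fin k)) (t : ℕ) :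
    MeasurableSet (graphSlice F t) := by
  have : graphSlice F t = ⋂ (i : Fin k), ⋂ (j : Fin k),
      {x : ℕ → ℕ → Bool | F.Adj i j → x ((i : ℕ) + t) ((j : ℕ) + t) = true} := by
    ext x; simp [graphSlice]
  rw [this]
  refine MeasurableSet.iInter fun i => MeasurableSet.iInter fun j => ?_
  by_cases h : F.Adj i j
  · simp only [h, true_implies]
    exact measurableSet_eq_fun (by
      exact (measurable_pi_apply _).comp (measurable_pi_apply _)) measurable_const
  · simp [h]

lemma measurable_permComp (σ : ℕ → ℕ) :
    Measurable (fun x : ℕ → ℕ → Bool => fun i j : ℕ => x (σ i) (σ j)) := by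
  refine measurable_pi_lambda _ fun i => measurable_pi_lambda _ fun j => ?_
  exact (measurable_pi_apply _).comp (measurable_pi_apply _)

section Exch

variable {Ω : Type*} [MeasurableSpace Ω] {μ : Measure Ω} [IsProbabilityMeasure μ]
  {H : Ω → ℕ → ℕ → Bool} {k : ℕ} {F : SimpleGraph (Fin k)}

lemma meas_block_pair (hmeas : Measurable H)
    (hexch : ∀ σ : Equiv.Perm ℕ, {i | σ i ≠ i}.Finite →
      Measure.map (fun ω => fun i j : ℕ => H ω (σ i) (σ j)) μ = Measure.map H μ)
    {a b : ℕ} (hab : a + k ≤ b) :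
    μ (H ⁻¹' (graphSlice F a) ∩ H ⁻¹' (graphSlice F b))
      = μ (H ⁻¹' (graphSlice F 0) ∩ H ⁻¹' (graphSlice F k)) := by
  set f : ℕ → ℕ := fun i => if i < k then a + i else b + (i - k) with hf
  have hinj : Set.InjOn f (Set.Iio (2 * k)) := by
    intro x hx y hy hxy
    simp only [Set.mem_Iio] at hx hy
    simp only [hf] at hxy
    split_ifs at hxy <;> omega
  obtain ⟨σ, hfin, hagree⟩ := exists_perm_extend (2 * k) f hinj
  have hσ1 : ∀ i : Fin k, σ ((i : ℕ)) = a + i := fun i => by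
    rw [hagree i (by omega)]; simp [hf, i.isLt]
  have hσ2 : ∀ i : Fin k, σ ((i : ℕ) + k) = b + i := fun i => by
    have hik : (i : ℕ) + k < 2 * k := by have := i.isLt; omega
    rw [hagree _ hik]; simp [hf]
  have hmeas' : Measurable (fun ω => fun i j : ℕ => H ω (σ i) (σ j)) :=
    (measurable_permComp σ).comp hmeas
  have hE : MeasurableSet (graphSlice F 0 ∩ graphSlice F k) :=
    (measurableSet_graphSlice F 0).inter (measurableSet_graphSlice F k)
  have := hexch σ hfin
  have h1 := congrArg (fun ν : Measure (ℕ → ℕ → Bool) => ν (graphSlice F 0 ∩ graphSlice F k)) this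
  simp only [Measure.map_apply hmeas' hE, Measure.map_apply hmeas hE] at h1
  rw [Set.preimage_inter, Set.preimage_inter] at h1
  have e1 : (fun ω => fun i j : ℕ => H ω (σ i) (σ j)) ⁻¹' graphSlice F 0
      = H ⁻¹' graphSlice F a := by
    ext ω
    simp only [Set.mem_preimage, graphSlice, Set.mem_setOf_eq]
    refine forall_congr' fun i => forall_congr' fun j => imp_congr_right fun _ => ?_
    rw [Nat.add_zero, Nat.add_zero, hσ1 i, hσ1 j, Nat.add_comm a ↑i, Nat.add_comm a ↑j]
  have e2 : (fun ω => fun i j : ℕ => H ω (σ i) (σ j)) ⁻¹' graphSlice F k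
      = H ⁻¹' graphSlice F b := by
    ext ω
    simp only [Set.mem_preimage, graphSlice, Set.mem_setOf_eq]
    refine forall_congr' fun i => forall_congr' fun j => imp_congr_right fun _ => ?_
    rw [hσ2 i, hσ2 j, Nat.add_comm b ↑i, Nat.add_comm b ↑j]
  rw [e1, e2] at h1
  exact h1

lemma meas_block_single (hmeas : Measurable H)
    (hexch : ∀ σ : Equiv.Perm ℕ, {i | σ i ≠ i}.Finite →
      Measure.map (fun ω => fun i j : ℕ => H ω (σ i) (σ j)) μ = Measure.map H μ)
    (a : ℕ) :
    μ (H ⁻¹' (graphSlice F a)) = μ (H ⁻¹' (graphSlice F 0)) := by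
  set f : ℕ → ℕ := fun i => a + i with hf
  have hinj : Set.InjOn f (Set.Iio k) := by intro x hx y hy hxy; simp [hf] at hxy; omega
  obtain ⟨σ, hfin, hagree⟩ := exists_perm_extend k f hinj
  have hσ1 : ∀ i : Fin k, σ ((i : ℕ)) = a + i := fun i => by rw [hagree i i.isLt]
  have hmeas' : Measurable (fun ω => fun i j : ℕ => H ω (σ i) (σ j)) :=
    (measurable_permComp σ).comp hmeas
  have hE : MeasurableSet (graphSlice F 0) := measurableSet_graphSlice F 0
  have h1 := congrArg (fun ν : Measure (ℕ → ℕ → Bool) => ν (graphSlice F 0)) (hexch σ hfin)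
  simp only [Measure.map_apply hmeas' hE, Measure.map_apply hmeas hE] at h1
  have e1 : (fun ω => fun i j : ℕ => H ω (σ i) (σ j)) ⁻¹' graphSlice F 0
      = H ⁻¹' graphSlice F a := by
    ext ω
    simp only [Set.mem_preimage, graphSlice, Set.mem_setOf_eq]
    refine forall_congr' fun i => forall_congr' fun j => imp_congr_right fun _ => ?_
    rw [Nat.add_zero, Nat.add_zero, hσ1 i, hσ1 j, Nat.add_comm a ↑i, Nat.add_comm a ↑j]
  rw [e1] at h1
  exact h1

end Exch

section Core

variable {Ω : Type*} [MeasurableSpace Ω] {μ : Measure Ω} [IsProbabilityMeasure μ]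

/-- The Cesàro average over blocks `Ico m (4^m)` of indicators. -/
noncomputable def cesw (B : ℕ → Set Ω) (m : ℕ) (ω : Ω) : ℝ :=
  ((4 ^ m : ℕ) : ℝ)⁻¹ * ∑ j ∈ Finset.Ico m (4 ^ m), (B j).indicator (fun _ => (1 : ℝ)) ω

lemma cesw_nonneg (B : ℕ → Set Ω) (m : ℕ) (ω : Ω) : 0 ≤ cesw B m ω := by
  unfold cesw
  have : (0:ℝ) ≤ ∑ j ∈ Finset.Ico m (4 ^ m), (B j).indicator (fun _ => (1 : ℝ)) ω :=
    Finset.sum_nonneg fun j _ => Set.indicator_nonneg (fun _ _ => zero_le_one) ω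
  positivity

lemma cesw_le_one (B : ℕ → Set Ω) (m : ℕ) (ω : Ω) : cesw B m ω ≤ 1 := by
  unfold cesw
  have h1 : ∑ j ∈ Finset.Ico m (4 ^ m), (B j).indicator (fun _ => (1 : ℝ)) ω
      ≤ ((Finset.Ico m (4 ^ m)).card : ℝ) * 1 := by
    have := Finset.sum_le_card_nsmul (Finset.Ico m (4 ^ m))
      (fun j => (B j).indicator (fun _ => (1 : ℝ)) ω) 1
      (fun j _ => by by_cases h : ω ∈ B j <;> simp [Set.indicator_apply, h])
    simpa [nsmul_eq_mul] using this
  have h2 : ((Finset.Ico m (4 ^ m)).card : ℝ) ≤ (4 ^ m : ℕ) := by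
    rw [Nat.card_Ico]; exact_mod_cast Nat.sub_le _ _
  rw [mul_one] at h1
  have h4 : (0:ℝ) < ((4 ^ m : ℕ) : ℝ) := by positivity
  calc ((4 ^ m : ℕ) : ℝ)⁻¹ * ∑ j ∈ Finset.Ico m (4 ^ m), (B j).indicator (fun _ => (1 : ℝ)) ω
      ≤ ((4 ^ m : ℕ) : ℝ)⁻¹ * ((4 ^ m : ℕ) : ℝ) := by
        apply mul_le_mul_of_nonneg_left (h1.trans h2) (by positivity)
    _ = 1 := inv_mul_cancel₀ h4.ne'

lemma measurable_cesw {B : ℕ → Set Ω} (hB : ∀ j, MeasurableSet (B j)) (m : ℕ) :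
    Measurable (cesw B m) :=
  (Finset.measurable_sum _ fun j _ =>
    (measurable_const.indicator (hB j))).const_mul _

lemma integrable_cesw {B : ℕ → Set Ω} (hB : ∀ j, MeasurableSet (B j)) (m : ℕ) :
    Integrable (cesw B m) μ :=
  (MeasureTheory.integrable_finset_sum _ fun j _ =>
    (integrable_const (1:ℝ)).indicator (hB j)).const_mul _

lemma sum_prod_integral {B : ℕ → Set Ω} (hB : ∀ j, MeasurableSet (B j)) {p q : ℝ}
    (hp : ∀ j, (μ (B j)).toReal = p) (hq : ∀ j l, j ≠ l → (μ (B j ∩ B l)).toReal = q)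
    (s t : Finset ℕ) :
    ∫ ω, (∑ j ∈ s, (B j).indicator (fun _ => (1:ℝ)) ω)
        * (∑ l ∈ t, (B l).indicator (fun _ => (1:ℝ)) ω) ∂μ
      = (s.card : ℝ) * t.card * q + ((s ∩ t).card : ℝ) * (p - q) := by
  have hpt : ∀ ω, (∑ j ∈ s, (B j).indicator (fun _ => (1:ℝ)) ω)
      * (∑ l ∈ t, (B l).indicator (fun _ => (1:ℝ)) ω)
      = ∑ j ∈ s, ∑ l ∈ t, (B j ∩ B l).indicator (fun _ => (1:ℝ)) ω := by
    intro ω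
    rw [Finset.sum_mul_sum]
    refine Finset.sum_congr rfl fun j _ => Finset.sum_congr rfl fun l _ => ?_
    have := congrFun (Set.inter_indicator_one (s := B j) (t := B l) (M₀ := ℝ)) ω
    exact this.symm
  simp only [hpt]
  rw [MeasureTheory.integral_finset_sum _ (fun j _ =>
    MeasureTheory.integrable_finset_sum _ (fun l _ =>
      (integrable_const (1:ℝ)).indicator ((hB j).inter (hB l))))]
  have : ∀ j ∈ s, ∫ ω, ∑ l ∈ t, (B j ∩ B l).indicator (fun _ => (1:ℝ)) ω ∂μ
      = ∑ l ∈ t, (if j = l then p else q) := by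
    intro j _
    rw [MeasureTheory.integral_finset_sum _ (fun l _ =>
      (integrable_const (1:ℝ)).indicator ((hB j).inter (hB l)))]
    refine Finset.sum_congr rfl fun l _ => ?_
    have h1 : ∫ ω, (B j ∩ B l).indicator (fun _ => (1:ℝ)) ω ∂μ = (μ (B j ∩ B l)).toReal := by
      exact MeasureTheory.integral_indicator_one ((hB j).inter (hB l)) (μ := μ)
    rw [h1]
    by_cases h : j = l
    · subst h; simp [hp j]
    · simp [h, hq j l h]
  rw [Finset.sum_congr rfl this]
  have hsplit : ∀ j, ∑ l ∈ t, (if j = l then p else q)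
      = (t.card : ℝ) * q + (if j ∈ t then p - q else 0) := by
    intro j
    have : ∀ l, (if j = l then p else q) = q + (if l = j then p - q else 0) := by
      intro l; by_cases h : j = l
      · subst h; simp
      · simp [h, Ne.symm h]
    simp only [this]
    rw [Finset.sum_add_distrib, Finset.sum_const, Finset.sum_ite_eq' t j (fun _ => p - q)]
    simp [nsmul_eq_mul, mul_comm]
  rw [Finset.sum_congr rfl (fun j _ => hsplit j), Finset.sum_add_distrib, Finset.sum_const,
    Finset.sum_ite_mem, Finset.sum_const]
  simp [nsmul_eq_mul]
  ring

lemma cesw_prod_eq {B : ℕ → Set Ω} (hB : ∀ j, MeasurableSet (B j)) {p q : ℝ}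
    (hp : ∀ j, (μ (B j)).toReal = p) (hq : ∀ j l, j ≠ l → (μ (B j ∩ B l)).toReal = q)
    {m M : ℕ} (hmM : m ≤ M) (hM4 : M ≤ 4 ^ m) :
    ∫ ω, cesw B m ω * cesw B M ω ∂μ
      = ((4 ^ m : ℕ) : ℝ)⁻¹ * ((4 ^ M : ℕ) : ℝ)⁻¹ *
        (((4 ^ m - m : ℕ) : ℝ) * ((4 ^ M - M : ℕ) : ℝ) * q + ((4 ^ m - M : ℕ) : ℝ) * (p - q)) := by
  have hpt : ∀ ω, cesw B m ω * cesw B M ω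
      = ((4 ^ m : ℕ) : ℝ)⁻¹ * ((4 ^ M : ℕ) : ℝ)⁻¹ *
        ((∑ j ∈ Finset.Ico m (4 ^ m), (B j).indicator (fun _ => (1:ℝ)) ω)
          * (∑ l ∈ Finset.Ico M (4 ^ M), (B l).indicator (fun _ => (1:ℝ)) ω)) := by
    intro ω; unfold cesw; ring
  simp only [hpt]
  rw [MeasureTheory.integral_const_mul, sum_prod_integral hB hp hq]
  have hcard1 : (Finset.Ico m (4 ^ m)).card = 4 ^ m - m := Nat.card_Ico _ _
  have hcard2 : (Finset.Ico M (4 ^ M)).card = 4 ^ M - M := Nat.card_Ico _ _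
  have hinter : Finset.Ico m (4 ^ m) ∩ Finset.Ico M (4 ^ M) = Finset.Ico M (4 ^ m) := by
    rw [Finset.Ico_inter_Ico]
    congr 1
    · omega
    · have : (4:ℕ) ^ m ≤ 4 ^ M := Nat.pow_le_pow_right (by norm_num) hmM
      omega
  rw [hinter, hcard1, hcard2, Nat.card_Ico]

lemma cesw_prod_close {B : ℕ → Set Ω} (hB : ∀ j, MeasurableSet (B j)) {p q : ℝ}
    (hp : ∀ j, (μ (B j)).toReal = p) (hq : ∀ j l, j ≠ l → (μ (B j ∩ B l)).toReal = q)
    (hq0 : 0 ≤ q) (hqp : q ≤ p) (hp1 : p ≤ 1)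
    {m M : ℕ} (hmM : m ≤ M) (hM : M ≤ m + 1) :
    |∫ ω, cesw B m ω * cesw B M ω ∂μ - q| ≤ (2 * m + 2) / 4 ^ m := by
  have hm4 : m < 4 ^ m := Nat.lt_pow_self (by norm_num : 1 < 4)
  have hM4' : M < 4 ^ M := Nat.lt_pow_self (by norm_num : 1 < 4)
  have hM4 : M ≤ 4 ^ m := by
    calc M ≤ m + 1 := hM
    _ ≤ 4 ^ m := hm4
  rw [cesw_prod_eq hB hp hq hmM hM4]
  set x : ℝ := ((4 ^ m : ℕ) : ℝ) with hxdef
  set y : ℝ := ((4 ^ M : ℕ) : ℝ) with hydef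
  have hx0 : (0:ℝ) < x := by positivity
  have hy0 : (0:ℝ) < y := by positivity
  have hc1 : ((4 ^ m - m : ℕ) : ℝ) = x - m := by
    rw [hxdef]; push_cast [Nat.cast_sub hm4.le]; ring
  have hc2 : ((4 ^ M - M : ℕ) : ℝ) = y - M := by
    rw [hydef]; push_cast [Nat.cast_sub hM4'.le]; ring
  have hc3 : ((4 ^ m - M : ℕ) : ℝ) = x - M := by
    rw [hxdef]; push_cast [Nat.cast_sub hM4]; ring
  rw [hc1, hc2, hc3]
  have hxm : (m : ℝ) + 1 ≤ x := by
    rw [hxdef]; exact_mod_cast hm4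
  have hyM : (M : ℝ) + 1 ≤ y := by
    rw [hydef]; exact_mod_cast hM4'
  have hxy : x ≤ y := by
    rw [hxdef, hydef]; exact_mod_cast Nat.pow_le_pow_right (by norm_num) hmM
  have hMm : (M : ℝ) ≤ m + 1 := by exact_mod_cast hM
  have hmM' : (m : ℝ) ≤ M := by exact_mod_cast hmM
  have hm0 : (0:ℝ) ≤ m := Nat.cast_nonneg m
  have heq : x⁻¹ * y⁻¹ * ((x - m) * (y - M) * q + (x - M) * (p - q)) - q
      = ((x - m) * (y - M) * q + (x - M) * (p - q) - x * y * q) / (x * y) := by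
    field_simp
  rw [heq, abs_div, abs_of_pos (by positivity : (0:ℝ) < x * y)]
  have hM0 : (0:ℝ) ≤ M := Nat.cast_nonneg M
  have hMx : (M:ℝ) ≤ x := by linarith
  have e1 : 0 ≤ q * ((M:ℝ) * (x - m)) := mul_nonneg hq0 (mul_nonneg hM0 (by linarith))
  have e3 : (x - M) * (p - q) ≤ x - M :=
    mul_le_of_le_one_right (by linarith) (by linarith)
  have e4 : 0 ≤ (x - M) * (p - q) := mul_nonneg (by linarith) (by linarith)
  have e5 : q * ((M:ℝ) * x) ≤ ((m:ℝ) + 1) * y := by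
    have h1 : q * ((M:ℝ) * x) ≤ (M:ℝ) * x :=
      mul_le_of_le_one_left (mul_nonneg hM0 hx0.le) (by linarith)
    have h2 : (M:ℝ) * x ≤ ((m:ℝ) + 1) * y :=
      mul_le_mul hMm hxy hx0.le (by linarith)
    linarith
  have e6 : q * ((m:ℝ) * y) ≤ ((m:ℝ) + 1) * y := by
    have h1 : q * ((m:ℝ) * y) ≤ (m:ℝ) * y :=
      mul_le_of_le_one_left (mul_nonneg hm0 hy0.le) (by linarith)
    have h2 : (m:ℝ) * y ≤ ((m:ℝ) + 1) * y :=
      mul_le_mul_of_nonneg_right (by linarith) hy0.le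
    linarith
  have e7 : 0 ≤ q * ((m:ℝ) * (M:ℝ)) := mul_nonneg hq0 (mul_nonneg hm0 hM0)
  have hid : (x - m) * (y - M) * q + (x - M) * (p - q) - x * y * q
      = q * ((m:ℝ) * M) - q * ((M:ℝ) * x) - q * ((m:ℝ) * y) + (x - M) * (p - q) := by ring
  have e8 : 0 ≤ q * ((m:ℝ) * y) := mul_nonneg hq0 (mul_nonneg hm0 hy0.le)
  have e9 : (0:ℝ) ≤ (2 * m + 1) * y := mul_nonneg (by linarith) hy0.le
  have hnum : |(x - m) * (y - M) * q + (x - M) * (p - q) - x * y * q| ≤ (2 * m + 2) * y := by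
    rw [hid, abs_le]
    constructor
    · linarith [e4, e5, e6, e7]
    · linarith [e1, e3, e8, e9, hxy, hMx, hM0]
  calc |(x - m) * (y - M) * q + (x - M) * (p - q) - x * y * q| / (x * y)
      ≤ ((2 * m + 2) * y) / (x * y) := by
        apply div_le_div_of_nonneg_right hnum (by positivity) |>.trans_eq rfl
    _ = (2 * m + 2) / x := by field_simp
    _ = (2 * m + 2) / 4 ^ m := by rw [hxdef]; norm_num

lemma integrable_cesw_mul {B : ℕ → Set Ω} (hB : ∀ j, MeasurableSet (B j)) (a b : ℕ) :
    Integrable (fun ω => cesw B a ω * cesw B b ω) μ := by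
  refine (integrable_cesw hB b).bdd_mul (c := 1) (measurable_cesw hB a).aestronglyMeasurable (Filter.Eventually.of_forall fun ω => ?_)
  rw [Real.norm_eq_abs, abs_of_nonneg (cesw_nonneg B a ω)]
  exact cesw_le_one B a ω

lemma cesw_diff_sq_int_le {B : ℕ → Set Ω} (hB : ∀ j, MeasurableSet (B j)) {p q : ℝ}
    (hp : ∀ j, (μ (B j)).toReal = p) (hq : ∀ j l, j ≠ l → (μ (B j ∩ B l)).toReal = q)
    (hq0 : 0 ≤ q) (hqp : q ≤ p) (hp1 : p ≤ 1) (m : ℕ) :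
    ∫ ω, (cesw B m ω - cesw B (m + 1) ω) ^ 2 ∂μ ≤ (8 * m + 8) / 4 ^ m := by
  have h1 := cesw_prod_close hB hp hq hq0 hqp hp1 (le_refl m) (Nat.le_succ m)
  have h2 := cesw_prod_close hB hp hq hq0 hqp hp1 (Nat.le_succ m) (le_refl (m + 1))
  have h3 := cesw_prod_close hB hp hq hq0 hqp hp1 (le_refl (m + 1)) (Nat.le_succ (m + 1))
  have h3' : (2 * ((m:ℝ) + 1) + 2) / 4 ^ (m + 1) ≤ (2 * m + 2) / 4 ^ m := by
    rw [div_le_div_iff₀ (by positivity) (by positivity)]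
    have : ((4:ℝ)) ^ (m + 1) = 4 * 4 ^ m := by ring
    rw [this]
    have h4 : (0:ℝ) < 4 ^ m := by positivity
    nlinarith [h4, Nat.cast_nonneg (α := ℝ) m]
  have h3'' : |∫ ω, cesw B (m+1) ω * cesw B (m+1) ω ∂μ - q| ≤ (2 * m + 2) / 4 ^ m := by
    refine le_trans ?_ h3'
    convert h3 using 2
    · rfl
    push_cast
    ring
  have hexp : ∀ ω : Ω, (cesw B m ω - cesw B (m + 1) ω) ^ 2
      = cesw B m ω * cesw B m ω - 2 * (cesw B m ω * cesw B (m+1) ω)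
        + cesw B (m+1) ω * cesw B (m+1) ω := fun ω => by ring
  rw [show (fun ω => (cesw B m ω - cesw B (m + 1) ω) ^ 2)
      = fun ω => cesw B m ω * cesw B m ω - 2 * (cesw B m ω * cesw B (m+1) ω)
        + cesw B (m+1) ω * cesw B (m+1) ω from funext hexp]
  have hf : Integrable (fun ω => cesw B m ω * cesw B m ω
      - 2 * (cesw B m ω * cesw B (m+1) ω)) μ :=
    (integrable_cesw_mul hB m m).sub ((integrable_cesw_mul hB m (m+1)).const_mul 2)
  have hg : Integrable (fun ω => cesw B (m+1) ω * cesw B (m+1) ω) μ :=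
    integrable_cesw_mul hB (m+1) (m+1)
  have hf1 : Integrable (fun ω => 2 * (cesw B m ω * cesw B (m+1) ω)) μ :=
    (integrable_cesw_mul hB m (m+1)).const_mul 2
  rw [MeasureTheory.integral_add hf hg,
    MeasureTheory.integral_sub (integrable_cesw_mul hB m m) hf1,
    MeasureTheory.integral_const_mul]
  have a1 := abs_le.mp h1
  have a2 := abs_le.mp h2
  have a3 := abs_le.mp h3''
  have : (8 * (m:ℝ) + 8) / 4 ^ m = 4 * ((2 * m + 2) / 4 ^ m) := by
    field_simp
    ring
  rw [this]
  linarith [a1.1, a1.2, a2.1, a2.2, a3.1, a3.2]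

lemma summable_eps : Summable (fun m : ℕ => ((m : ℝ) + 1) ^ 2 * (1/2) ^ m) := by
  have h12 : ‖(1/2 : ℝ)‖ < 1 := by rw [Real.norm_eq_abs, abs_of_pos (by norm_num : (0:ℝ) < 1/2)]; norm_num
  have h0 : Summable (fun m : ℕ => ((m : ℝ)) ^ 2 * (1/2) ^ m) :=
    summable_pow_mul_geometric_of_norm_lt_one 2 h12
  have h1 : Summable (fun m : ℕ => (2 : ℝ) * ((m : ℝ) ^ 1 * (1/2) ^ m)) :=
    (summable_pow_mul_geometric_of_norm_lt_one 1 h12).mul_left 2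
  have h2 : Summable (fun m : ℕ => ((m : ℝ)) ^ 0 * (1/2) ^ m) :=
    summable_pow_mul_geometric_of_norm_lt_one 0 h12
  have := (h0.add h1).add h2
  refine this.congr fun m => ?_
  push_cast
  ring

lemma cesw_ae_tendsto_limsup {B : ℕ → Set Ω} (hB : ∀ j, MeasurableSet (B j)) {p q : ℝ}
    (hp : ∀ j, (μ (B j)).toReal = p) (hq : ∀ j l, j ≠ l → (μ (B j ∩ B l)).toReal = q)
    (hq0 : 0 ≤ q) (hqp : q ≤ p) (hp1 : p ≤ 1) :
    ∀ᵐ ω ∂μ, Filter.Tendsto (fun m => cesw B m ω) Filter.atTop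
      (nhds (Filter.limsup (fun m => cesw B m ω) Filter.atTop)) := by
  set D : ℕ → Ω → ℝ := fun m ω => cesw B m ω - cesw B (m + 1) ω with hD
  set ε : ℕ → ℝ := fun m => ((m : ℝ) + 1) ^ 2 * (1/2) ^ m with hε
  have hε0 : ∀ m, 0 < ε m := fun m => by positivity
  set sm : ℕ → Set Ω := fun m => {ω | ε m ≤ |D m ω|} with hsm
  have hDmeas : ∀ m, Measurable (D m) := fun m =>
    (measurable_cesw hB m).sub (measurable_cesw hB (m + 1))
  have hD2int : ∀ m, Integrable (fun ω => (D m ω) ^ 2) μ := by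
    intro m
    have : Integrable (fun ω => cesw B m ω * cesw B m ω
        - 2 * (cesw B m ω * cesw B (m+1) ω) + cesw B (m+1) ω * cesw B (m+1) ω) μ :=
      ((integrable_cesw_mul hB m m).sub
        ((integrable_cesw_mul hB m (m+1)).const_mul 2)).add (integrable_cesw_mul hB (m+1) (m+1))
    exact this.congr (Filter.Eventually.of_forall fun ω => by simp only [hD]; ring)
  -- Markov bound
  have hmark : ∀ m, μ (sm m) ≤ ENNReal.ofReal (8 / ((m : ℝ) + 1) ^ 3) := by
    intro m
    have hsub : sm m ⊆ {ω | ENNReal.ofReal (ε m ^ 2) ≤ ENNReal.ofReal ((D m ω) ^ 2)} := by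
      intro ω hω
      simp only [hsm, Set.mem_setOf_eq] at hω ⊢
      apply ENNReal.ofReal_le_ofReal
      calc ε m ^ 2 ≤ |D m ω| ^ 2 := by
            exact pow_le_pow_left₀ (hε0 m).le hω 2
        _ = (D m ω) ^ 2 := sq_abs _
    have hfmeas : AEMeasurable (fun ω => ENNReal.ofReal ((D m ω) ^ 2)) μ :=
      (ENNReal.measurable_ofReal.comp ((hDmeas m).pow_const 2)).aemeasurable
    have hne0 : ENNReal.ofReal (ε m ^ 2) ≠ 0 := by
      simp only [ne_eq, ENNReal.ofReal_eq_zero, not_le]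
      positivity
    have h1 : μ (sm m) ≤ (∫⁻ ω, ENNReal.ofReal ((D m ω) ^ 2) ∂μ) / ENNReal.ofReal (ε m ^ 2) :=
      le_trans (measure_mono hsub) (meas_ge_le_lintegral_div hfmeas hne0 ENNReal.ofReal_ne_top)
    have h2 : ∫⁻ ω, ENNReal.ofReal ((D m ω) ^ 2) ∂μ = ENNReal.ofReal (∫ ω, (D m ω) ^ 2 ∂μ) :=
      (MeasureTheory.ofReal_integral_eq_lintegral_ofReal (hD2int m)
        (Filter.Eventually.of_forall fun ω => sq_nonneg _)).symm
    have h3 : ∫ ω, (D m ω) ^ 2 ∂μ ≤ (8 * m + 8) / 4 ^ m :=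
      cesw_diff_sq_int_le hB hp hq hq0 hqp hp1 m
    calc μ (sm m) ≤ ENNReal.ofReal (∫ ω, (D m ω) ^ 2 ∂μ) / ENNReal.ofReal (ε m ^ 2) := by
          rw [← h2]; exact h1
      _ ≤ ENNReal.ofReal ((8 * m + 8) / 4 ^ m) / ENNReal.ofReal (ε m ^ 2) :=
          ENNReal.div_le_div_right (ENNReal.ofReal_le_ofReal h3) _
      _ = ENNReal.ofReal (((8 * m + 8) / 4 ^ m) / (ε m ^ 2)) :=
          (ENNReal.ofReal_div_of_pos (by positivity)).symm
      _ ≤ ENNReal.ofReal (8 / ((m : ℝ) + 1) ^ 3) := by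
          apply ENNReal.ofReal_le_ofReal
          have hεsq : ε m ^ 2 = ((m : ℝ) + 1) ^ 4 * ((4 : ℝ) ^ m)⁻¹ := by
            simp only [hε]
            rw [mul_pow, ← pow_mul, ← pow_mul, show ((1:ℝ)/2) ^ (m * 2) = ((1:ℝ)/4) ^ m by
              rw [mul_comm m 2, pow_mul]; norm_num]
            rw [one_div, inv_pow]
          rw [hεsq]
          rw [div_le_iff₀ (by positivity), div_mul_eq_mul_div, div_le_div_iff₀ (by positivity)
            (by positivity)]
          have h4m : (0:ℝ) < 4 ^ m := by positivity
          field_simp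
          ring_nf
          nlinarith [h4m, Nat.cast_nonneg (α := ℝ) m]
  -- Borel–Cantelli
  have hsummable : Summable (fun m : ℕ => 8 / ((m : ℝ) + 1) ^ 3) := by
    have h3 : Summable (fun n : ℕ => 1 / (n : ℝ) ^ 3) :=
      Real.summable_one_div_nat_pow.mpr (by norm_num)
    have h4 : Summable (fun n : ℕ => 1 / ((n : ℝ) + 1) ^ 3) := by
      have := (summable_nat_add_iff 1).mpr h3
      exact this.congr fun n => by push_cast; ring_nf
    have := h4.mul_left 8
    exact this.congr fun n => by ring
  have htsum : (∑' m, μ (sm m)) ≠ (⊤ : ENNReal) := by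
    have h1 : (∑' m, μ (sm m)) ≤ ∑' m : ℕ, ENNReal.ofReal (8 / ((m : ℝ) + 1) ^ 3) :=
      ENNReal.tsum_le_tsum hmark
    have h2 : (∑' m : ℕ, ENNReal.ofReal (8 / ((m : ℝ) + 1) ^ 3))
        = ENNReal.ofReal (∑' m : ℕ, 8 / ((m : ℝ) + 1) ^ 3) :=
      (ENNReal.ofReal_tsum_of_nonneg (fun m => by positivity) hsummable).symm
    rw [h2] at h1
    exact ne_top_of_le_ne_top ENNReal.ofReal_ne_top h1
  have hae := MeasureTheory.ae_eventually_notMem htsum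
  filter_upwards [hae] with ω hω
  have hbd : ∀ᶠ m in Filter.atTop, ‖D m ω‖ ≤ ε m := by
    filter_upwards [hω] with m hm
    rw [Real.norm_eq_abs]
    exact le_of_not_ge fun hc => hm hc
  have hsum : Summable (fun m => D m ω) :=
    Summable.of_norm_bounded_eventually_nat summable_eps hbd
  have hpartial : Filter.Tendsto (fun n => ∑ i ∈ Finset.range n, D i ω) Filter.atTop
      (nhds (∑' i, D i ω)) := hsum.hasSum.tendsto_sum_nat
  have htel : ∀ n, ∑ i ∈ Finset.range n, D i ω = cesw B 0 ω - cesw B n ω := fun n =>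
    Finset.sum_range_sub' (f := fun i => cesw B i ω) n
  have hconv : Filter.Tendsto (fun n => cesw B n ω) Filter.atTop
      (nhds (cesw B 0 ω - ∑' i, D i ω)) := by
    have h1 : Filter.Tendsto (fun n => cesw B 0 ω - ∑ i ∈ Finset.range n, D i ω)
        Filter.atTop (nhds (cesw B 0 ω - ∑' i, D i ω)) :=
      Filter.Tendsto.sub tendsto_const_nhds hpartial
    refine h1.congr fun n => ?_
    rw [htel n]
    ring
  rw [hconv.limsup_eq]
  exact hconv

lemma ratio_tendsto : Filter.Tendsto (fun m : ℕ => ((4 ^ m - m : ℕ) : ℝ) * ((4 ^ m : ℕ) : ℝ)⁻¹)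
    Filter.atTop (nhds 1) := by
  have hz : Filter.Tendsto (fun m : ℕ => (m : ℝ) * ((4 : ℝ) ^ m)⁻¹) Filter.atTop (nhds 0) := by
    have hsum : Summable (fun m : ℕ => (m : ℝ) ^ 1 * (1/4) ^ m) :=
      summable_pow_mul_geometric_of_norm_lt_one 1 (by
        rw [Real.norm_eq_abs, abs_of_pos (by norm_num : (0:ℝ) < 1/4)]; norm_num)
    have := hsum.tendsto_atTop_zero
    refine this.congr fun m => ?_
    rw [pow_one, one_div, inv_pow]
  have h1 : Filter.Tendsto (fun m : ℕ => 1 - (m : ℝ) * ((4 : ℝ) ^ m)⁻¹) Filter.atTop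
      (nhds (1 - 0)) := Filter.Tendsto.sub tendsto_const_nhds hz
  rw [sub_zero] at h1
  refine h1.congr fun m => ?_
  have hm4 : m ≤ 4 ^ m := (Nat.lt_pow_self (by norm_num : 1 < 4)).le
  have h4 : (0:ℝ) < (4:ℝ) ^ m := by positivity
  rw [Nat.cast_sub hm4]
  push_cast
  field_simp

lemma cesw_integral_eq {B : ℕ → Set Ω} (hB : ∀ j, MeasurableSet (B j)) {p : ℝ}
    (hp : ∀ j, (μ (B j)).toReal = p) (m : ℕ) :
    ∫ ω, cesw B m ω ∂μ = ((4 ^ m - m : ℕ) : ℝ) * ((4 ^ m : ℕ) : ℝ)⁻¹ * p := by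
  unfold cesw
  rw [MeasureTheory.integral_const_mul, MeasureTheory.integral_finset_sum _ (fun j _ =>
    (integrable_const (1:ℝ)).indicator (hB j))]
  have : ∀ j ∈ Finset.Ico m (4 ^ m), ∫ ω, (B j).indicator (fun _ => (1:ℝ)) ω ∂μ = p := by
    intro j _
    have h1 : ∫ ω, (B j).indicator (fun _ => (1:ℝ)) ω ∂μ = (μ (B j)).toReal := by
      exact MeasureTheory.integral_indicator_one (hB j) (μ := μ)
    rw [h1, hp j]
  rw [Finset.sum_congr rfl this, Finset.sum_const, Nat.card_Ico, nsmul_eq_mul]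
  ring

lemma indicator_mul_cesw_integral_eq {A : Set Ω} (hA : MeasurableSet A)
    {B : ℕ → Set Ω} (hB : ∀ j, MeasurableSet (B j)) {q : ℝ}
    (hqA : ∀ j, (μ (A ∩ B j)).toReal = q) (m : ℕ) :
    ∫ ω, A.indicator (fun _ => (1:ℝ)) ω * cesw B m ω ∂μ
      = ((4 ^ m - m : ℕ) : ℝ) * ((4 ^ m : ℕ) : ℝ)⁻¹ * q := by
  have hpt : ∀ ω, A.indicator (fun _ => (1:ℝ)) ω * cesw B m ω
      = ((4 ^ m : ℕ) : ℝ)⁻¹ * ∑ j ∈ Finset.Ico m (4 ^ m),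
          (A ∩ B j).indicator (fun _ => (1:ℝ)) ω := by
    intro ω
    unfold cesw
    have hsum : ∑ j ∈ Finset.Ico m (4 ^ m), (A ∩ B j).indicator (fun _ => (1:ℝ)) ω
        = ∑ j ∈ Finset.Ico m (4 ^ m),
            A.indicator (fun _ => (1:ℝ)) ω * (B j).indicator (fun _ => (1:ℝ)) ω :=
      Finset.sum_congr rfl fun j _ => by
        have := congrFun (Set.inter_indicator_one (s := A) (t := B j) (M₀ := ℝ)) ω
        exact this
    rw [hsum, ← Finset.mul_sum]
    ring
  rw [show (fun ω => A.indicator (fun _ => (1:ℝ)) ω * cesw B m ω)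
      = fun ω => ((4 ^ m : ℕ) : ℝ)⁻¹ * ∑ j ∈ Finset.Ico m (4 ^ m),
          (A ∩ B j).indicator (fun _ => (1:ℝ)) ω from funext hpt]
  rw [MeasureTheory.integral_const_mul, MeasureTheory.integral_finset_sum _ (fun j _ =>
    (integrable_const (1:ℝ)).indicator (hA.inter (hB j)))]
  have : ∀ j ∈ Finset.Ico m (4 ^ m), ∫ ω, (A ∩ B j).indicator (fun _ => (1:ℝ)) ω ∂μ = q := by
    intro j _
    have h1 : ∫ ω, (A ∩ B j).indicator (fun _ => (1:ℝ)) ω ∂μ = (μ (A ∩ B j)).toReal := by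
      exact MeasureTheory.integral_indicator_one (hA.inter (hB j)) (μ := μ)
    rw [h1, hqA j]
  rw [Finset.sum_congr rfl this, Finset.sum_const, Nat.card_Ico, nsmul_eq_mul]
  ring

lemma ae_const_of_zero_one (T : Ω → ℝ) (hT : Measurable T)
    (h01 : ∀ r : ℝ, μ {ω | T ω ≤ r} = 0 ∨ μ {ω | T ω ≤ r} = 1)
    (hbdd : ∀ᵐ ω ∂μ, 0 ≤ T ω ∧ T ω ≤ 1) :
    ∃ t : ℝ, ∀ᵐ ω ∂μ, T ω = t := by
  set R : Set ℝ := {r : ℝ | μ {ω | T ω ≤ r} = 1} with hR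
  have hbad : μ {ω | ¬ (0 ≤ T ω ∧ T ω ≤ 1)} = 0 := by
    rw [← MeasureTheory.ae_iff]
    exact hbdd
  have h1R : (1 : ℝ) ∈ R := by
    have hsub : {ω | ¬ (0 ≤ T ω ∧ T ω ≤ 1)} ⊇ {ω | T ω ≤ 1}ᶜ := by
      intro ω hω
      simp only [Set.mem_compl_iff, Set.mem_setOf_eq, not_le] at hω
      simp only [Set.mem_setOf_eq]
      intro h
      linarith [h.2]
    have hc : μ ({ω | T ω ≤ 1}ᶜ) = 0 := measure_mono_null hsub hbad
    have hmeas : MeasurableSet {ω | T ω ≤ 1} := hT measurableSet_Iic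
    simp only [hR, Set.mem_setOf_eq]
    have := prob_compl_eq_zero_iff (μ := μ) hmeas
    rw [← this]
    exact hc
  have hRbdd : ∀ r ∈ R, (0:ℝ) ≤ r + 1 := by
    intro r hr
    by_contra hc
    push_neg at hc
    have hr0 : r < -1 := by linarith
    have hsub : {ω | T ω ≤ r} ⊆ {ω | ¬ (0 ≤ T ω ∧ T ω ≤ 1)} := by
      intro ω hω
      simp only [Set.mem_setOf_eq] at hω ⊢
      intro h
      linarith [h.1]
    have : μ {ω | T ω ≤ r} = 0 := measure_mono_null hsub hbad
    rw [hr] at this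
    exact one_ne_zero this
  have hne : R.Nonempty := ⟨1, h1R⟩
  have hbb : BddBelow R := ⟨-1, fun r hr => by linarith [hRbdd r hr]⟩
  set t : ℝ := sInf R with ht
  have hclose : ∀ ε : ℝ, 0 < ε → μ {ω | T ω ≤ t + ε} = 1 := by
    intro ε hε
    obtain ⟨r, hrR, hrlt⟩ := Real.lt_sInf_add_pos hne hε
    have hsub : {ω | T ω ≤ r} ⊆ {ω | T ω ≤ t + ε} := fun ω hω => by
      simp only [Set.mem_setOf_eq] at hω ⊢
      linarith
    have hrR' : μ {ω | T ω ≤ r} = 1 := hrR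
    have := measure_mono (μ := μ) hsub
    rw [hrR'] at this
    exact le_antisymm prob_le_one this
  have hTt : μ {ω | T ω ≤ t} = 1 := by
    have hint : {ω | T ω ≤ t} = ⋂ n : ℕ, {ω | T ω ≤ t + 1 / (n + 1)} := by
      ext ω
      simp only [Set.mem_setOf_eq, Set.mem_iInter]
      constructor
      · intro h n
        have : (0:ℝ) < 1 / ((n:ℝ) + 1) := by positivity
        linarith
      · intro h
        by_contra hc
        push_neg at hc
        obtain ⟨n, hn⟩ := exists_nat_one_div_lt (by linarith : (0:ℝ) < T ω - t)
        have := h n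
        push_cast at hn this
        linarith
    rw [hint]
    have hcompl : μ ((⋂ n : ℕ, {ω | T ω ≤ t + 1 / (n + 1)})ᶜ) = 0 := by
      rw [Set.compl_iInter]
      refine measure_iUnion_null fun n => ?_
      have hmeas : MeasurableSet {ω | T ω ≤ t + 1 / ((n:ℕ) + 1)} := hT measurableSet_Iic
      rw [prob_compl_eq_zero_iff (μ := μ) hmeas]
      exact hclose _ (by positivity)
    have hmeas : MeasurableSet (⋂ n : ℕ, {ω | T ω ≤ t + 1 / (n + 1)}) :=
      MeasurableSet.iInter fun n => hT measurableSet_Iic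
    exact (prob_compl_eq_zero_iff (μ := μ) hmeas).mp hcompl
  have hTlt : μ {ω | T ω < t} = 0 := by
    have hun : {ω | T ω < t} = ⋃ n : ℕ, {ω | T ω ≤ t - 1 / (n + 1)} := by
      ext ω
      simp only [Set.mem_setOf_eq, Set.mem_iUnion]
      constructor
      · intro h
        obtain ⟨n, hn⟩ := exists_nat_one_div_lt (by linarith : (0:ℝ) < t - T ω)
        exact ⟨n, by push_cast at hn ⊢; linarith⟩
      · rintro ⟨n, hn⟩
        have : (0:ℝ) < 1 / ((n:ℝ) + 1) := by positivity
        linarith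
    rw [hun]
    refine measure_iUnion_null fun n => ?_
    rcases h01 (t - 1 / (n + 1)) with h | h
    · exact h
    · exfalso
      have : (t - 1 / ((n:ℕ) + 1) : ℝ) ∈ R := h
      have := csInf_le hbb this
      have hpos : (0:ℝ) < 1 / ((n:ℝ) + 1) := by positivity
      rw [← ht] at this
      linarith
  refine ⟨t, ?_⟩
  rw [MeasureTheory.ae_iff]
  have hsub : {ω | ¬ T ω = t} ⊆ {ω | T ω < t} ∪ {ω | T ω ≤ t}ᶜ := by
    intro ω hω
    simp only [Set.mem_setOf_eq] at hω
    rcases lt_trichotomy (T ω) t with h | h | h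
    · exact Or.inl h
    · exact absurd h hω
    · exact Or.inr (by simp only [Set.mem_compl_iff, Set.mem_setOf_eq]; linarith)
  refine measure_mono_null hsub ?_
  have h2 : μ ({ω | T ω ≤ t}ᶜ) = 0 := by
    have hmeas : MeasurableSet {ω | T ω ≤ t} := hT measurableSet_Iic
    exact (prob_compl_eq_zero_iff (μ := μ) hmeas).mpr hTt
  exact measure_union_null hTlt h2

end Core

/-- If `H` is an exchangeable random infinite graph on `ℕ` whose tail σ-field
`⋂_n σ(H|{n,n+1,…})` is trivial, then for every labelled finite graph `F` on `[k]`,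
`P(H ⊇ F ∪ F_k) = P(H ⊇ F)²`, where `F_k` is the copy of `F` shifted to the vertex set
`{k, …, 2k-1}`. -/
theorem tail_trivial_imp_shift_square
    {Ω : Type*} [MeasurableSpace Ω] (μ : Measure Ω) [IsProbabilityMeasure μ]
    (H : Ω → ℕ → ℕ → Bool) (hmeas : Measurable H)
    (hsym : ∀ ω i j, H ω i j = H ω j i) (hirr : ∀ ω i, H ω i i = false)
    (hexch : ∀ σ : Equiv.Perm ℕ, {i | σ i ≠ i}.Finite →
      Measure.map (fun ω => fun i j : ℕ => H ω (σ i) (σ j)) μ = Measure.map H μ)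
    (htail : ∀ s : Set Ω,
      MeasurableSet[⨅ n : ℕ, MeasurableSpace.comap
        (fun ω => fun i j : ℕ => H ω (i + n) (j + n)) inferInstance] s →
      μ s = 0 ∨ μ s = 1)
    {k : ℕ} (F : SimpleGraph (Fin k)) :
    μ {ω | (∀ i j : Fin k, F.Adj i j → H ω (i : ℕ) (j : ℕ) = true) ∧
           (∀ i j : Fin k, F.Adj i j → H ω ((i : ℕ) + k) ((j : ℕ) + k) = true)}
      = μ {ω | ∀ i j : Fin k, F.Adj i j → H ω (i : ℕ) (j : ℕ) = true} ^ 2 := by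
  classical
  have hgoalL : {ω | (∀ i j : Fin k, F.Adj i j → H ω (i : ℕ) (j : ℕ) = true) ∧
      (∀ i j : Fin k, F.Adj i j → H ω ((i : ℕ) + k) ((j : ℕ) + k) = true)}
      = H ⁻¹' (graphSlice F 0) ∩ H ⁻¹' (graphSlice F k) := by
    ext ω
    simp [graphSlice, Set.mem_inter_iff, Set.mem_preimage]
  have hgoalR : {ω | ∀ i j : Fin k, F.Adj i j → H ω (i : ℕ) (j : ℕ) = true}
      = H ⁻¹' (graphSlice F 0) := by
    ext ω
    simp [graphSlice, Set.mem_preimage]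
  rw [hgoalL, hgoalR]
  rcases Nat.eq_zero_or_pos k with hk0 | hk
  · subst hk0
    have h1 : graphSlice F 0 = Set.univ := by
      ext x; simp only [graphSlice, Set.mem_setOf_eq, Set.mem_univ, iff_true]
      intro i; exact i.elim0
    have h2 : graphSlice F 0 = graphSlice F 0 ∩ graphSlice F 0 := by rw [Set.inter_self]
    rw [h1]
    simp [measure_univ]
  -- main case
  set A : Set Ω := H ⁻¹' (graphSlice F 0) with hAdef
  set Bb : ℕ → Set Ω := fun j => H ⁻¹' (graphSlice F ((j + 1) * k)) with hBbdef
  have hAmeas : MeasurableSet A := hmeas (measurableSet_graphSlice F 0)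
  have hBbmeas : ∀ j, MeasurableSet (Bb j) := fun j => hmeas (measurableSet_graphSlice F _)
  set p : ℝ := (μ A).toReal with hpdef
  set q : ℝ := (μ (A ∩ H ⁻¹' (graphSlice F k))).toReal with hqdef
  have hp : ∀ j, (μ (Bb j)).toReal = p := by
    intro j
    rw [hpdef, hAdef, hBbdef]
    exact congrArg ENNReal.toReal (meas_block_single hmeas hexch _)
  have hqA : ∀ j, (μ (A ∩ Bb j)).toReal = q := by
    intro j
    rw [hqdef, hAdef, hBbdef]
    refine congrArg ENNReal.toReal ?_
    have hb : 0 + k ≤ (j + 1) * k := by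
      have := Nat.le_mul_of_pos_left k (show 0 < j + 1 by omega)
      omega
    exact meas_block_pair (μ := μ) (F := F) hmeas hexch hb
  have hq : ∀ j l, j ≠ l → (μ (Bb j ∩ Bb l)).toReal = q := by
    intro j l hjl
    rw [hqdef, hAdef, hBbdef]
    refine congrArg ENNReal.toReal ?_
    rcases lt_or_gt_of_ne hjl with h | h
    · refine meas_block_pair hmeas hexch ?_
      calc (j + 1) * k + k = (j + 2) * k := by ring
        _ ≤ (l + 1) * k := Nat.mul_le_mul_right _ (by omega)
    · rw [Set.inter_comm]
      refine meas_block_pair hmeas hexch ?_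
      calc (l + 1) * k + k = (l + 2) * k := by ring
        _ ≤ (j + 1) * k := Nat.mul_le_mul_right _ (by omega)
  have hq0 : 0 ≤ q := ENNReal.toReal_nonneg
  have hqp : q ≤ p := by
    rw [hpdef, hqdef]
    exact ENNReal.toReal_le_toReal (measure_ne_top μ _) (measure_ne_top μ _) |>.mpr
      (measure_mono Set.inter_subset_left)
  have hp1 : p ≤ 1 := by
    rw [hpdef]
    exact ENNReal.toReal_le_toReal (measure_ne_top μ _) ENNReal.one_ne_top |>.mpr prob_le_one
      |>.trans_eq ENNReal.toReal_one
  have hconv := cesw_ae_tendsto_limsup (μ := μ) hBbmeas hp hq hq0 hqp hp1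
  set T := fun ω => Filter.limsup (fun m => cesw Bb m ω) Filter.atTop with hTdef
  have hTmeasTail : ∀ n : ℕ, ∃ φ : (ℕ → ℕ → Bool) → ℝ, Measurable φ ∧
      ∀ ω, T ω = φ (fun i j : ℕ => H ω (i + n) (j + n)) := by
    intro n
    refine ⟨fun x => Filter.limsup (fun m => if n ≤ m then
      ((4 ^ m : ℕ) : ℝ)⁻¹ * ∑ j ∈ Finset.Ico m (4 ^ m),
        (graphSlice F ((j + 1) * k - n)).indicator (fun _ => (1:ℝ)) x else 0) Filter.atTop,
      ?_, ?_⟩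
    · refine Measurable.limsup fun m => ?_
      by_cases hmn : n ≤ m
      · simp only [hmn, if_true]
        exact (Finset.measurable_sum _ fun j _ =>
          measurable_const.indicator (measurableSet_graphSlice F _)).const_mul _
      · simp only [hmn, if_false]
        exact measurable_const
    · intro ω
      refine Filter.limsup_congr ?_
      filter_upwards [Filter.eventually_ge_atTop n] with m hmn
      rw [if_pos hmn]
      unfold cesw
      congr 1
      refine Finset.sum_congr rfl fun j hj => ?_
      have hj' : m ≤ j := (Finset.mem_Ico.mp hj).1
      have hjn : n ≤ (j + 1) * k := by
        have h1 : j + 1 ≤ (j + 1) * k := Nat.le_mul_of_pos_right _ hk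
        omega
      have hmem : ω ∈ Bb j ↔ (fun i j' : ℕ => H ω (i + n) (j' + n))
          ∈ graphSlice F ((j + 1) * k - n) := by
        simp only [hBbdef, Set.mem_preimage, graphSlice, Set.mem_setOf_eq]
        refine forall_congr' fun i => forall_congr' fun i' => imp_congr_right fun _ => ?_
        have e1 : (i : ℕ) + ((j + 1) * k - n) + n = (i : ℕ) + (j + 1) * k := by omega
        have e2 : (i' : ℕ) + ((j + 1) * k - n) + n = (i' : ℕ) + (j + 1) * k := by omega
        rw [e1, e2]
      by_cases hω : ω ∈ Bb j
      · rw [Set.indicator_of_mem hω, Set.indicator_of_mem (hmem.mp hω)]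
      · rw [Set.indicator_of_notMem hω,
          Set.indicator_of_notMem (fun hc => hω (hmem.mpr hc))]
  have hiInfLe : Measurable[⨅ n : ℕ, MeasurableSpace.comap
      (fun ω => fun i j : ℕ => H ω (i + n) (j + n)) inferInstance] T := by
    intro s hs
    rw [MeasurableSpace.measurableSet_iInf]
    intro n
    obtain ⟨φ, hφ, hcomp⟩ := hTmeasTail n
    refine ⟨φ ⁻¹' s, hφ hs, ?_⟩
    ext ω
    simp only [Set.mem_preimage]
    rw [← hcomp ω]
  have h01 : ∀ r : ℝ, μ {ω | T ω ≤ r} = 0 ∨ μ {ω | T ω ≤ r} = 1 := by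
    intro r
    have : MeasurableSet[⨅ n : ℕ, MeasurableSpace.comap
        (fun ω => fun i j : ℕ => H ω (i + n) (j + n)) inferInstance] {ω | T ω ≤ r} :=
      hiInfLe measurableSet_Iic
    exact htail _ this
  have hTmeas : Measurable T := Measurable.limsup fun m => measurable_cesw hBbmeas m
  have hbdd : ∀ᵐ ω ∂μ, 0 ≤ T ω ∧ T ω ≤ 1 := by
    filter_upwards [hconv] with ω hω
    constructor
    · exact ge_of_tendsto' hω fun m => cesw_nonneg Bb m ω
    · exact le_of_tendsto' hω fun m => cesw_le_one Bb m ω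
  obtain ⟨t, hts⟩ := ae_const_of_zero_one (μ := μ) T hTmeas h01 hbdd
  have hdct1 : Filter.Tendsto (fun m => ∫ ω, cesw Bb m ω ∂μ) Filter.atTop
      (nhds (∫ _ω, t ∂μ)) := by
    refine MeasureTheory.tendsto_integral_of_dominated_convergence (fun _ => (1:ℝ))
      (fun m => (measurable_cesw hBbmeas m).aestronglyMeasurable) (integrable_const 1)
      (fun m => Filter.Eventually.of_forall fun ω => ?_) ?_
    · rw [Real.norm_eq_abs, abs_of_nonneg (cesw_nonneg Bb m ω)]
      exact cesw_le_one Bb m ω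
    · filter_upwards [hconv, hts] with ω h1 h2
      have h2' : Filter.limsup (fun m => cesw Bb m ω) Filter.atTop = t := h2
      rw [h2'] at h1
      exact h1
  have hconst1 : (∫ _ω : Ω, t ∂μ) = t := by simp [measure_univ]
  have hint1 : Filter.Tendsto (fun m => ∫ ω, cesw Bb m ω ∂μ) Filter.atTop (nhds p) := by
    have h2 := ratio_tendsto.mul_const p
    rw [one_mul] at h2
    refine h2.congr fun m => ?_
    rw [← cesw_integral_eq (μ := μ) hBbmeas hp m]
  have htp : t = p := by
    rw [hconst1] at hdct1
    exact tendsto_nhds_unique hdct1 hint1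
  have hdct2 : Filter.Tendsto
      (fun m => ∫ ω, A.indicator (fun _ => (1:ℝ)) ω * cesw Bb m ω ∂μ) Filter.atTop
      (nhds (∫ ω, A.indicator (fun _ => (1:ℝ)) ω * t ∂μ)) := by
    refine MeasureTheory.tendsto_integral_of_dominated_convergence (fun _ => (1:ℝ))
      (fun m => ((measurable_const.indicator hAmeas).mul
        (measurable_cesw hBbmeas m)).aestronglyMeasurable) (integrable_const 1)
      (fun m => Filter.Eventually.of_forall fun ω => ?_) ?_
    · rw [Real.norm_eq_abs, abs_mul]
      have ha : |A.indicator (fun _ => (1:ℝ)) ω| ≤ 1 := by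
        by_cases h : ω ∈ A <;> simp [Set.indicator_apply, h]
      have hb : |cesw Bb m ω| ≤ 1 := by
        rw [abs_of_nonneg (cesw_nonneg Bb m ω)]
        exact cesw_le_one Bb m ω
      calc |A.indicator (fun _ => (1:ℝ)) ω| * |cesw Bb m ω| ≤ 1 * 1 :=
            mul_le_mul ha hb (abs_nonneg _) zero_le_one
        _ = 1 := by norm_num
    · filter_upwards [hconv, hts] with ω h1 h2
      have h2' : Filter.limsup (fun m => cesw Bb m ω) Filter.atTop = t := h2
      rw [h2'] at h1
      exact h1.const_mul _
  have hconst2 : (∫ ω, A.indicator (fun _ => (1:ℝ)) ω * t ∂μ) = p * t := by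
    rw [MeasureTheory.integral_mul_const]
    congr 1
    have h1 : ∫ ω, A.indicator (fun _ => (1:ℝ)) ω ∂μ = (μ A).toReal := by
      exact MeasureTheory.integral_indicator_one hAmeas (μ := μ)
    rw [h1, hpdef]
  have hint2 : Filter.Tendsto
      (fun m => ∫ ω, A.indicator (fun _ => (1:ℝ)) ω * cesw Bb m ω ∂μ) Filter.atTop
      (nhds q) := by
    have h2 := ratio_tendsto.mul_const q
    rw [one_mul] at h2
    refine h2.congr fun m => ?_
    rw [← indicator_mul_cesw_integral_eq (μ := μ) hAmeas hBbmeas hqA m]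
  have hqpt : q = p * t := by
    rw [hconst2] at hdct2
    exact tendsto_nhds_unique hint2 hdct2
  have hq2 : q = p ^ 2 := by rw [hqpt, htp]; ring
  refine (ENNReal.toReal_eq_toReal_iff' (measure_ne_top μ _) ?_).mp ?_
  · exact ENNReal.pow_ne_top (measure_ne_top μ _)
  · rw [ENNReal.toReal_pow]
    exact hq2
end
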